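/- A ring R is idempotent reflexive if and only if the power series ring R[[x]] is idempotent reflexive. -/

import Mathlib

section Defs

variable (S : Type*) [Ring S]

/-- `S` is right idempotent reflexive: `aSe = 0` implies `eSa = 0` for idempotent `e`. -/
def RightIdemReflexive : Prop :=
  ∀ a e : S, e * e = e → (∀ r : S, a * r * e = 0) → ∀ r : S, e * r * a = 0

/-- `S` is left idempotent reflexive: `eSa = 0` implies `aSe = 0` for idempotent `e`. -/
def LeftIdemReflexive : Prop :=
  ∀ a e : S, e * e = e → (∀ r : S, e * r * a = 0) → ∀ r : S, a * r * e = 0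

/-- `S` is idempotent reflexive if it is both left and right idempotent reflexive. -/
def IdemReflexive : Prop := LeftIdemReflexive S ∧ RightIdemReflexive S

/-- `S` is abelian if every idempotent is central. -/
def IsAbelianRing : Prop := ∀ e : S, e * e = e → ∀ r : S, e * r = r * e

end Defs


open PowerSeries


section Aux
variable {R : Type*} [Ring R]

/-- The conjugating data: for an idempotent `E`, with `e` its constant coefficient,
there exist `V W` with `V*W = 1`, `W*V = 1`, and `E*V = V*C e`. -/
lemma conj_idem (E : R⟦X⟧) (hE : E * E = E) :
    ∃ V W : R⟦X⟧, V * W = 1 ∧ W * V = 1 ∧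
      E = V * C (constantCoeff E) * W ∧
      C (constantCoeff E) = W * E * V := by
  set e := constantCoeff E with he
  have hee : e * e = e := by
    have := congrArg (constantCoeff) hE
    simpa using this
  set V : R⟦X⟧ := E * C e + (1 - E) * (1 - C e) with hV
  have hcV : constantCoeff V = 1 := by
    simp only [hV, map_add, map_mul, map_sub, map_one, constantCoeff_C, ← he]
    have : (1 - e) * (1 - e) = 1 - e - e + e * e := by noncomm_ring
    rw [this, hee]; abel
  set W : R⟦X⟧ := invOfUnit V 1 with hW
  have hcV' : constantCoeff V = ((1 : Rˣ) : R) := by simpa using hcV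
  have hVW : V * W = 1 := mul_invOfUnit V 1 hcV'
  have hWV : W * V = 1 := invOfUnit_mul V 1 hcV'
  have hEV : E * V = V * C e := by
    have hCe : C e * C e = C e := by rw [← map_mul, hee]
    have h1 : E * (1 - E) = 0 := by rw [mul_sub, mul_one, hE, sub_self]
    have h2 : (1 - C e) * C e = 0 := by rw [sub_mul, one_mul, hCe, sub_self]
    calc E * V = E * C e := by
          rw [hV, mul_add, ← mul_assoc E (1 - E), h1, zero_mul, add_zero, ← mul_assoc, hE]
      _ = V * C e := by
          rw [hV, add_mul, mul_assoc (1 - E), h2, mul_zero, add_zero, mul_assoc, hCe]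
  refine ⟨V, W, hVW, hWV, ?_, ?_⟩
  · have : E * V * W = V * C e * W := by rw [hEV]
    rwa [mul_assoc, hVW, mul_one] at this
  · have : W * (E * V) = W * (V * C e) := by rw [hEV]
    rw [← mul_assoc, ← mul_assoc, hWV, one_mul] at this
    exact this.symm
end Aux

section Main
variable {R : Type*} [Ring R]

lemma right_ps (h : RightIdemReflexive R) : RightIdemReflexive (PowerSeries R) := by
  intro A E hE hA f
  obtain ⟨V, W, hVW, hWV, hE1, hE2⟩ := conj_idem E hE
  set e := constantCoeff E with he
  -- A * g * C e = 0 for all g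
  have hACe : ∀ g : R⟦X⟧, A * g * C e = 0 := by
    intro g
    have := hA (g * W)
    calc A * g * C e = A * (g * W) * E * V := by
          rw [hE2]; noncomm_ring
      _ = 0 := by rw [this, zero_mul]
  -- coefficientwise
  have hre : ∀ n : ℕ, ∀ r : R, coeff n A * r * e = 0 := by
    intro n r
    have := congrArg (coeff n) (hACe (C r))
    rwa [coeff_mul_C, coeff_mul_C, map_zero] at this
  have her : ∀ n : ℕ, ∀ r : R, e * r * coeff n A = 0 := by
    intro n
    exact h (coeff n A) e (by
      have := congrArg (constantCoeff) hE
      simpa using this) (hre n)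
  -- C e * g * A = 0 for all g
  have hCeA : ∀ g : R⟦X⟧, C e * g * A = 0 := by
    intro g
    ext n
    rw [map_zero, coeff_mul]
    refine Finset.sum_eq_zero fun x _ => ?_
    rw [coeff_C_mul]
    exact her x.2 _
  calc E * f * A = V * (C e * (W * f) * A) := by rw [hE1]; noncomm_ring
    _ = 0 := by rw [hCeA, mul_zero]

lemma left_ps (h : LeftIdemReflexive R) : LeftIdemReflexive (PowerSeries R) := by
  intro A E hE hA f
  obtain ⟨V, W, hVW, hWV, hE1, hE2⟩ := conj_idem E hE
  set e := constantCoeff E with he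
  have hCeA : ∀ g : R⟦X⟧, C e * g * A = 0 := by
    intro g
    have := hA (V * g)
    calc C e * g * A = W * (E * (V * g) * A) := by rw [hE2]; noncomm_ring
      _ = 0 := by rw [this, mul_zero]
  have her : ∀ n : ℕ, ∀ r : R, e * r * coeff n A = 0 := by
    intro n r
    have := congrArg (coeff n) (hCeA (C r))
    rwa [map_zero, mul_assoc, coeff_C_mul, coeff_C_mul, ← mul_assoc] at this
  have hre : ∀ n : ℕ, ∀ r : R, coeff n A * r * e = 0 := by
    intro n
    exact h (coeff n A) e (by
      have := congrArg (constantCoeff) hE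
      simpa using this) (her n)
  have hACe : ∀ g : R⟦X⟧, A * g * C e = 0 := by
    intro g
    ext n
    rw [map_zero, mul_assoc, coeff_mul]
    refine Finset.sum_eq_zero fun x _ => ?_
    rw [coeff_mul_C, ← mul_assoc]
    exact hre x.1 _
  calc A * f * E = (A * (f * V) * C e) * W := by rw [hE1]; noncomm_ring
    _ = 0 := by rw [hACe, zero_mul]

end Main

theorem stmt12 {R : Type*} [Ring R] :
    IdemReflexive R ↔ IdemReflexive (PowerSeries R) := by
  constructor
  · rintro ⟨hl, hr⟩
    exact ⟨left_ps hl, right_ps hr⟩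
  · rintro ⟨hl, hr⟩
    constructor
    · intro a e hee ha r
      have hCe : (C e) * (C e) = C e := by rw [← map_mul, hee]
      have h0 : ∀ F : R⟦X⟧, C e * F * C a = 0 := by
        intro F
        ext n
        rw [map_zero, mul_assoc, coeff_C_mul, coeff_mul_C, ← mul_assoc]
        exact ha _
      have := hl (C a) (C e) hCe h0 (C r)
      have := congrArg (constantCoeff) this
      simpa using this
    · intro a e hee ha r
      have hCe : (C e) * (C e) = C e := by rw [← map_mul, hee]
      have h0 : ∀ F : R⟦X⟧, C a * F * C e = 0 := by
        intro F
        ext n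
        rw [map_zero, mul_assoc, coeff_C_mul, coeff_mul_C, ← mul_assoc]
        exact ha _
      have := hr (C a) (C e) hCe h0 (C r)
      have := congrArg (constantCoeff) this
      simpa using this
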